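/- Let g be a Lie algebra of the form g = h ⊕ ⊕_{α ∈ Φ} g_α where h is abelian, each g_α is one-dimensional spanned by X_α for α in a finite subset Φ of h* spanning h*, [h, X_α] is given by [H,X_α] = α(H)X_α, and Φ is a root system (in particular, for each α ∈ Φ also −α ∈ Φ, and α(H_α) ≠ 0 where H_α = [X_α, X_{−α}]). Then any abelian ideal A of g is zero; hence g is semisimple. -/

import Mathlib

open Polynomial

private lemma pow_mem_invariant {M : Type*} [AddCommGroup M] [Module ℂ M]
    (T : Module.End ℂ M) (A : Submodule ℂ M) (hA : ∀ x ∈ A, T x ∈ A) (n : ℕ) :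
    ∀ x ∈ A, (T ^ n) x ∈ A := by
  induction n with
  | zero => simp only [pow_zero, Module.End.one_apply]; exact fun x hx => hx
  | succ n ih =>
      intro x hx
      rw [pow_succ, Module.End.mul_apply]
      exact ih _ (hA x hx)

private lemma aeval_mem_invariant {M : Type*} [AddCommGroup M] [Module ℂ M]
    (T : Module.End ℂ M) (A : Submodule ℂ M) (hA : ∀ x ∈ A, T x ∈ A) (p : ℂ[X]) :
    ∀ x ∈ A, (aeval T p) x ∈ A := by
  induction p using Polynomial.induction_on' with
  | add p q hp hq =>
      intro x hx
      rw [map_add, LinearMap.add_apply]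
      exact A.add_mem (hp x hx) (hq x hx)
  | monomial n c =>
      intro x hx
      rw [aeval_monomial, Module.End.mul_apply, Module.algebraMap_end_apply]
      exact A.smul_mem _ (pow_mem_invariant T A hA n x hx)

private lemma aeval_apply_eig {M : Type*} [AddCommGroup M] [Module ℂ M]
    (T : Module.End ℂ M) (μ : ℂ) (x : M) (hx : T x = μ • x) (p : ℂ[X]) :
    (aeval T p) x = p.eval μ • x := by
  have hpow : ∀ n : ℕ, (T ^ n) x = μ ^ n • x := by
    intro n
    induction n with
    | zero => simp
    | succ k ih =>
        rw [pow_succ, Module.End.mul_apply, hx, map_smul, ih, smul_smul, pow_succ, mul_comm]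
  induction p using Polynomial.induction_on' with
  | add p q hp hq => rw [map_add, LinearMap.add_apply, hp, hq, eval_add, add_smul]
  | monomial n c =>
      rw [aeval_monomial, Module.End.mul_apply, Module.algebraMap_end_apply, hpow,
        eval_monomial, smul_smul]

private lemma component_mem_of_sum_mem {M : Type*} [AddCommGroup M] [Module ℂ M]
    (T : Module.End ℂ M) (A : Submodule ℂ M) (hA : ∀ x ∈ A, T x ∈ A)
    {ι : Type*} [DecidableEq ι] (s : Finset ι) (v : ι → M) (μ : ι → ℂ)
    (hinj : Set.InjOn μ s)
    (heig : ∀ i ∈ s, T (v i) = μ i • v i)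
    (hsum : (∑ i ∈ s, v i) ∈ A) : ∀ i ∈ s, v i ∈ A := by
  intro i hi
  have key : (aeval T (Lagrange.basis s μ i)) (∑ j ∈ s, v j) = v i := by
    rw [map_sum, Finset.sum_eq_single i]
    · rw [aeval_apply_eig T (μ i) _ (heig i hi), Lagrange.eval_basis_self hinj hi, one_smul]
    · intro j hj hji
      rw [aeval_apply_eig T (μ j) _ (heig j hj), Lagrange.eval_basis_of_ne hji.symm hj,
        zero_smul]
    · intro h; exact absurd hi h
  rw [← key]
  exact aeval_mem_invariant T A hA _ _ hsum

/-- Let `L = h ⊕ ⊕_{α ∈ Φ} g_α` with `h` abelian, each `g_α` one-dimensional spanned by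
`X α`, `[H, X α] = α(H) • X α`, `Φ` finite and spanning `h*`, closed under negation, and
with `α(H_α) ≠ 0` for `H_α = [X α, X (−α)] ∈ h`.  Then every abelian ideal of `L` is zero;
hence `L` is semisimple (has trivial radical). -/
theorem no_abelian_ideals_of_root_decomposition
    (L : Type*) [LieRing L] [LieAlgebra ℂ L] [FiniteDimensional ℂ L]
    (H : LieSubalgebra ℂ L) (habelian : IsLieAbelian H)
    (Φ : Set (Module.Dual ℂ H)) (hfin : Φ.Finite)
    (X : Module.Dual ℂ H → L)
    (hXne : ∀ α ∈ Φ, X α ≠ 0)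
    (hspan : H.toSubmodule ⊔ Submodule.span ℂ (X '' Φ) = ⊤)
    (hind : LinearIndependent ℂ (fun α : Φ => X α.1))
    (hact : ∀ α ∈ Φ, ∀ h : H, ⁅(h : L), X α⁆ = α h • X α)
    (hneg : ∀ α ∈ Φ, -α ∈ Φ)
    (hbr : ∀ α ∈ Φ, ∀ β ∈ Φ, α + β ∈ Φ →
      ⁅X α, X β⁆ ∈ Submodule.span ℂ ({X (α + β)} : Set L))
    (hHα : ∀ α ∈ Φ, ⁅X α, X (-α)⁆ ∈ H)
    (hαHα : ∀ α ∈ Φ, ∀ h : H, (h : L) = ⁅X α, X (-α)⁆ → α h ≠ 0)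
    (hdual : Submodule.span ℂ Φ = ⊤) :
    (∀ A : LieIdeal ℂ L, IsLieAbelian A → A = ⊥) ∧
    LieAlgebra.HasTrivialRadical ℂ L := by
  classical
  -- every α ∈ Φ is a nonzero functional
  have hΦne : ∀ α ∈ Φ, α ≠ 0 := by
    intro α hα h0
    exact hαHα α hα ⟨⁅X α, X (-α)⁆, hHα α hα⟩ rfl (by simp [h0])
  have key : ∀ A : LieIdeal ℂ L, IsLieAbelian A → A = ⊥ := by
    intro A hA
    -- Step 1: no root vector lies in A
    have hXA : ∀ α ∈ Φ, X α ∉ A := by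
      intro α hα hXmem
      have hHmem : ⁅X α, X (-α)⁆ ∈ A := by
        rw [← lie_skew]
        exact A.neg_mem (A.lie_mem hXmem)
      set h₀ : H := ⟨⁅X α, X (-α)⁆, hHα α hα⟩ with hh₀
      have h2 : ⁅(⟨⁅X α, X (-α)⁆, hHmem⟩ : A), (⟨X α, hXmem⟩ : A)⁆ = 0 := hA.trivial _ _
      have hzero : ⁅(h₀ : L), X α⁆ = 0 := congrArg Subtype.val h2
      rw [hact α hα h₀] at hzero
      rcases smul_eq_zero.mp hzero with h1 | h2
      · exact hαHα α hα h₀ rfl h1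
      · exact hXne α hα h2
    rw [LieSubmodule.eq_bot_iff]
    intro a ha
    -- decompose a
    have hamem : a ∈ H.toSubmodule ⊔ Submodule.span ℂ (X '' Φ) := by
      rw [hspan]; exact Submodule.mem_top
    obtain ⟨y, hy, z, hz, hyz⟩ := Submodule.mem_sup.mp hamem
    obtain ⟨c, hcsupp, hcz⟩ := (Finsupp.mem_span_image_iff_linearCombination ℂ).mp hz
    rw [Finsupp.mem_supported] at hcsupp
    -- find a separating element h of H
    set s := c.support with hs
    have hsΦ : ∀ α ∈ s, α ∈ Φ := fun α hα => hcsupp hα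
    set F : Finset (Subspace ℂ H) :=
      s.image (fun α => LinearMap.ker α) ∪
        ((s ×ˢ s).filter (fun p => p.1 ≠ p.2)).image
          (fun p => LinearMap.ker (p.1 - p.2)) with hF
    have htopF : ⊤ ∉ F := by
      intro htop
      rw [hF, Finset.mem_union] at htop
      rcases htop with h1 | h1
      · obtain ⟨α, hα, hker⟩ := Finset.mem_image.mp h1
        exact hΦne α (hsΦ α hα) (LinearMap.ker_eq_top.mp hker)
      · obtain ⟨⟨α, β⟩, hαβ, hker⟩ := Finset.mem_image.mp h1
        rw [Finset.mem_filter] at hαβ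
        have : α - β = 0 := LinearMap.ker_eq_top.mp hker
        exact hαβ.2 (by simpa [sub_eq_zero] using this)
    have hcover := Subspace.biUnion_ne_univ_of_top_notMem htopF
    obtain ⟨h, hh⟩ := Set.ne_univ_iff_exists_notMem _ |>.mp hcover
    rw [Set.mem_iUnion₂] at hh
    push_neg at hh
    have hne0 : ∀ α ∈ s, α h ≠ 0 := by
      intro α hα
      have hm := hh (LinearMap.ker α)
        (Finset.mem_union_left _ (Finset.mem_image_of_mem _ hα))
      intro heq
      exact hm (by simp only [SetLike.mem_coe, LinearMap.mem_ker]; exact heq)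
    have hinj : Set.InjOn (fun α : Module.Dual ℂ H => α h) s := by
      intro α hα β hβ hEq
      by_contra hne
      have hmem : (α, β) ∈ (s ×ˢ s).filter (fun p => p.1 ≠ p.2) := by
        rw [Finset.mem_filter, Finset.mem_product]
        exact ⟨⟨hα, hβ⟩, hne⟩
      have hm := hh (LinearMap.ker (α - β))
        (Finset.mem_union_right _ (Finset.mem_image_of_mem _ hmem))
      exact hm (by simp only [SetLike.mem_coe, LinearMap.mem_ker, LinearMap.sub_apply,
        sub_eq_zero]; exact hEq)
    -- the bracket of h with a lies in A and equals the weighted sum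
    have hya : ⁅(h : L), y⁆ = 0 :=
      congrArg Subtype.val (habelian.trivial h (⟨y, hy⟩ : H))
    set v : Module.Dual ℂ H → L := fun α => (α h * c α) • X α with hv
    have hsum : ⁅(h : L), a⁆ = ∑ α ∈ s, v α := by
      rw [← hyz, lie_add, hya, zero_add, ← hcz, Finsupp.linearCombination_apply,
        Finsupp.sum, ← LieAlgebra.ad_apply (R := ℂ), map_sum]
      refine Finset.sum_congr rfl fun α hα => ?_
      rw [LieAlgebra.ad_apply, lie_smul, hact α (hsΦ α hα) h, hv, smul_smul, mul_comm]
    have hsummem : (∑ α ∈ s, v α) ∈ A := by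
      rw [← hsum]; exact A.lie_mem ha
    -- extract components
    have hcomp : ∀ α ∈ s, v α ∈ A := by
      refine component_mem_of_sum_mem (LieAlgebra.ad ℂ L (h : L)) A.toSubmodule
        (fun x hx => ?_) s v (fun α => α h) hinj (fun α hα => ?_) hsummem
      · exact A.lie_mem hx
      · rw [hv, LieAlgebra.ad_apply, lie_smul, hact α (hsΦ α hα) h, smul_smul, smul_smul,
          mul_comm]
    -- hence c = 0
    have hc0 : c = 0 := by
      ext α
      by_contra hcα
      have hαs : α ∈ s := Finsupp.mem_support_iff.mpr (by simpa using hcα)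
      have hXmem : X α ∈ A := by
        have := A.toSubmodule.smul_mem (α h * c α)⁻¹ (hcomp α hαs)
        rwa [hv, smul_smul, inv_mul_cancel₀ (mul_ne_zero (hne0 α hαs)
          (Finsupp.mem_support_iff.mp hαs)), one_smul] at this
      exact hXA α (hsΦ α hαs) hXmem
    have hz0 : z = 0 := by rw [← hcz, hc0, map_zero]
    have hay : a = y := by rw [← hyz, hz0, add_zero]
    -- now a = y ∈ H; show all roots vanish on it
    set y₀ : H := ⟨y, hy⟩ with hy₀
    have hyA : y ∈ A := hay ▸ ha
    have hvanish : ∀ α ∈ Φ, α y₀ = 0 := by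
      intro α hα
      by_contra hne
      have hbra : ⁅(y₀ : L), X α⁆ ∈ A := by
        rw [← lie_skew]
        exact A.neg_mem (A.lie_mem hyA)
      rw [hact α hα y₀] at hbra
      have hXmem : X α ∈ A := by
        have := A.toSubmodule.smul_mem (α y₀)⁻¹ hbra
        rwa [smul_smul, inv_mul_cancel₀ hne, one_smul] at this
      exact hXA α hα hXmem
    have hall : ∀ f : Module.Dual ℂ H, f y₀ = 0 := by
      intro f
      have hf : f ∈ Submodule.span ℂ Φ := by rw [hdual]; exact Submodule.mem_top
      have hle : Submodule.span ℂ Φ ≤ LinearMap.ker (LinearMap.applyₗ y₀) := by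
        rw [Submodule.span_le]
        intro g hg
        simpa [LinearMap.mem_ker] using hvanish g hg
      simpa [LinearMap.mem_ker] using hle hf
    have : y₀ = 0 := (Module.forall_dual_apply_eq_zero_iff ℂ y₀).mp hall
    rw [hay]
    exact congrArg Subtype.val this
  exact ⟨key, (LieAlgebra.hasTrivialRadical_iff_no_abelian_ideals ℂ L).mpr key⟩
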